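/- Let A be a Banach algebra such that every cyclic bounded derivation D : A → A* satisfies D**(A**) ⊆ WAP(A) (viewing WAP(A) ⊆ A* ⊆ A***). If the bidual A** endowed with the first Arens product □ is approximately cyclic amenable, then A is approximately cyclic amenable. -/

import Mathlib

open Filter Topology

noncomputable section

universe u v

variable {A : Type u} [NonUnitalNormedRing A] [NormedSpace ℂ A]
  [IsScalarTower ℂ A A] [SMulCommClass ℂ A A]

/-- The left module action of `A` on its dual `A*`: `(a · f) b = f (b * a)`. -/
def lAct (a : A) (f : A →L[ℂ] ℂ) : A →L[ℂ] ℂ :=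
  f.comp ((ContinuousLinearMap.mul ℂ A).flip a)

/-- The right module action of `A` on its dual `A*`: `(f · a) b = f (a * b)`. -/
def rAct (f : A →L[ℂ] ℂ) (a : A) : A →L[ℂ] ℂ :=
  f.comp (ContinuousLinearMap.mul ℂ A a)

/-- A bounded linear `D : A → A*` is a derivation if `D (a * b) = D a · b + a · D b`. -/
def IsDerivation (D : A →L[ℂ] (A →L[ℂ] ℂ)) : Prop :=
  ∀ a b : A, D (a * b) = rAct (D a) b + lAct a (D b)

/-- A derivation `D : A → A*` is cyclic if `⟨D a, b⟩ + ⟨D b, a⟩ = 0` for all `a, b`. -/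
def IsCyclicDeriv (D : A →L[ℂ] (A →L[ℂ] ℂ)) : Prop :=
  ∀ a b : A, D a b + D b a = 0

/-- `D : A → A*` is approximately inner if there is a net `(f i)` in `A*` with
`D a = lim_i (a · f i - f i · a)` in norm, for every `a ∈ A`. -/
def IsApproxInner {A : Type u} [NonUnitalNormedRing A] [NormedSpace ℂ A]
    [IsScalarTower ℂ A A] [SMulCommClass ℂ A A] (D : A →L[ℂ] (A →L[ℂ] ℂ)) : Prop :=
  ∃ (ι : Type u) (l : Filter ι) (f : ι → (A →L[ℂ] ℂ)), l.NeBot ∧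
    ∀ a : A, Tendsto (fun i => lAct a (f i) - rAct (f i) a) l (𝓝 (D a))

/-- `D : A → A*` is inner if `D a = a · f - f · a` for some fixed `f ∈ A*`. -/
def IsInner (D : A →L[ℂ] (A →L[ℂ] ℂ)) : Prop :=
  ∃ f : A →L[ℂ] ℂ, ∀ a : A, D a = lAct a f - rAct f a

/-- A Banach algebra is approximately cyclic amenable if every cyclic bounded
derivation `D : A → A*` is approximately inner. -/
def ApproxCyclicAmenable (A : Type u) [NonUnitalNormedRing A] [NormedSpace ℂ A]
    [IsScalarTower ℂ A A] [SMulCommClass ℂ A A] : Prop :=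
  ∀ D : A →L[ℂ] (A →L[ℂ] ℂ), IsDerivation D → IsCyclicDeriv D → IsApproxInner D

/-- A Banach algebra is cyclic amenable if every cyclic bounded derivation
`D : A → A*` is inner. -/
def CyclicAmenable (A : Type u) [NonUnitalNormedRing A] [NormedSpace ℂ A]
    [IsScalarTower ℂ A A] [SMulCommClass ℂ A A] : Prop :=
  ∀ D : A →L[ℂ] (A →L[ℂ] ℂ), IsDerivation D → IsCyclicDeriv D → IsInner D

/-- The bidual of `A`; below we install the first Arens product on it. -/
abbrev Bidual (A : Type u) [NormedAddCommGroup A] [NormedSpace ℂ A] : Type u :=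
  (A →L[ℂ] ℂ) →L[ℂ] ℂ

namespace Bidual

variable (A)

/-- `f ↦ (a ↦ f · a)` where `(f · a) b = f (a * b)`, as a continuous bilinear map. -/
def rActL : (A →L[ℂ] ℂ) →L[ℂ] A →L[ℂ] (A →L[ℂ] ℂ) :=
  (((ContinuousLinearMap.compL ℂ A (A →L[ℂ] A) (A →L[ℂ] ℂ)).flip
      (ContinuousLinearMap.mul ℂ A)).comp
    (ContinuousLinearMap.compL ℂ A A ℂ))

@[simp] lemma rActL_apply (f : A →L[ℂ] ℂ) (a b : A) : rActL A f a b = f (a * b) := rfl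

/-- The action `G · f` of the bidual on the dual: `(G · f) a = G (f · a)`. -/
def dotAct (G : Bidual A) : (A →L[ℂ] ℂ) →L[ℂ] (A →L[ℂ] ℂ) :=
  (ContinuousLinearMap.compL ℂ A (A →L[ℂ] ℂ) ℂ G).comp (rActL A)

@[simp] lemma dotAct_apply (G : Bidual A) (f : A →L[ℂ] ℂ) (a : A) :
    dotAct A G f a = G (rActL A f a) := rfl

variable {A}

/-- The first Arens product on the bidual: `⟨F □ G, f⟩ = ⟨F, G · f⟩`. -/
instance : Mul (Bidual A) := ⟨fun F G => F.comp (dotAct A G)⟩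

@[simp] lemma mul_apply (F G : Bidual A) (f : A →L[ℂ] ℂ) :
    (F * G) f = F (dotAct A G f) := rfl

lemma dotAct_add (G H : Bidual A) : dotAct A (G + H) = dotAct A G + dotAct A H := by
  refine ContinuousLinearMap.ext fun g => ContinuousLinearMap.ext fun a => ?_
  simp

lemma dotAct_zero : dotAct A (0 : Bidual A) = 0 := by
  refine ContinuousLinearMap.ext fun g => ContinuousLinearMap.ext fun a => ?_
  simp

lemma dotAct_smul (c : ℂ) (G : Bidual A) : dotAct A (c • G) = c • dotAct A G := by
  refine ContinuousLinearMap.ext fun g => ContinuousLinearMap.ext fun a => ?_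
  simp

instance instNonUnitalRing : NonUnitalRing (Bidual A) where
  __ := (inferInstance : AddCommGroup ((A →L[ℂ] ℂ) →L[ℂ] ℂ))
  mul := (· * ·)
  left_distrib F G H := by
    refine ContinuousLinearMap.ext fun f => ?_
    simp [dotAct_add]
  right_distrib F G H := by
    refine ContinuousLinearMap.ext fun f => ?_
    rfl
  zero_mul F := by refine ContinuousLinearMap.ext fun f => ?_; rfl
  mul_zero F := by
    refine ContinuousLinearMap.ext fun f => ?_
    simp [dotAct_zero]
  mul_assoc F G H := by
    refine ContinuousLinearMap.ext fun f => ?_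
    show F _ = F _
    congr 1
    refine ContinuousLinearMap.ext fun a => ?_
    show G _ = G _
    congr 1
    refine ContinuousLinearMap.ext fun b => ?_
    show H _ = H _
    congr 1
    refine ContinuousLinearMap.ext fun c => ?_
    exact congrArg f (mul_assoc a b c)

lemma norm_dotAct_apply_le (G : Bidual A) (f : A →L[ℂ] ℂ) :
    ‖dotAct A G f‖ ≤ ‖G‖ * ‖f‖ := by
  refine ContinuousLinearMap.opNorm_le_bound _ (by positivity) fun a => ?_
  calc ‖G (rActL A f a)‖ ≤ ‖G‖ * ‖rActL A f a‖ := G.le_opNorm _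
    _ ≤ ‖G‖ * (‖f‖ * ‖a‖) := by
        refine mul_le_mul_of_nonneg_left ?_ (norm_nonneg G)
        refine ContinuousLinearMap.opNorm_le_bound _ (by positivity) fun b => ?_
        calc ‖f (a * b)‖ ≤ ‖f‖ * ‖a * b‖ := f.le_opNorm _
          _ ≤ ‖f‖ * (‖a‖ * ‖b‖) :=
              mul_le_mul_of_nonneg_left (norm_mul_le a b) (norm_nonneg f)
          _ = ‖f‖ * ‖a‖ * ‖b‖ := by ring
    _ = ‖G‖ * ‖f‖ * ‖a‖ := by ring

instance instNonUnitalNormedRing : NonUnitalNormedRing (Bidual A) where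
  __ := instNonUnitalRing
  __ := (inferInstance : NormedAddCommGroup ((A →L[ℂ] ℂ) →L[ℂ] ℂ))
  norm_mul_le F G := by
    refine ContinuousLinearMap.opNorm_le_bound _ (by positivity) fun f => ?_
    calc ‖F (dotAct A G f)‖ ≤ ‖F‖ * ‖dotAct A G f‖ := F.le_opNorm _
      _ ≤ ‖F‖ * (‖G‖ * ‖f‖) :=
          mul_le_mul_of_nonneg_left (norm_dotAct_apply_le G f) (norm_nonneg F)
      _ = ‖F‖ * ‖G‖ * ‖f‖ := by ring

instance : IsScalarTower ℂ (Bidual A) (Bidual A) where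
  smul_assoc c F G := by
    refine ContinuousLinearMap.ext fun f => ?_
    rfl

instance : SMulCommClass ℂ (Bidual A) (Bidual A) where
  smul_comm c F G := by
    refine ContinuousLinearMap.ext fun f => ?_
    show c • (F (dotAct A G f)) = F (dotAct A (c • G) f)
    rw [dotAct_smul]
    simp

end Bidual

/-- `f ↦ (a ↦ a · f)` where `(a · f) b = f (b * a)`, as a continuous bilinear map. -/
def lActL (A : Type u) [NonUnitalNormedRing A] [NormedSpace ℂ A]
    [IsScalarTower ℂ A A] [SMulCommClass ℂ A A] :
    (A →L[ℂ] ℂ) →L[ℂ] A →L[ℂ] (A →L[ℂ] ℂ) :=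
  (((ContinuousLinearMap.compL ℂ A (A →L[ℂ] A) (A →L[ℂ] ℂ)).flip
      ((ContinuousLinearMap.mul ℂ A).flip)).comp
    (ContinuousLinearMap.compL ℂ A A ℂ))

@[simp] lemma lActL_apply (f : A →L[ℂ] ℂ) (a b : A) : lActL A f a b = f (b * a) := rfl

/-- The Banach-space adjoint (transpose) of a bounded linear map: `adjointMap T g = g ∘ T`. -/
def adjointMap {E : Type u} {F : Type v} [NormedAddCommGroup E] [NormedSpace ℂ E]
    [NormedAddCommGroup F] [NormedSpace ℂ F] (T : E →L[ℂ] F) :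
    (F →L[ℂ] ℂ) →L[ℂ] (E →L[ℂ] ℂ) :=
  (ContinuousLinearMap.compL ℂ E F ℂ).flip T

@[simp] lemma adjointMap_apply {E : Type u} {F : Type v} [NormedAddCommGroup E]
    [NormedSpace ℂ E] [NormedAddCommGroup F] [NormedSpace ℂ F] (T : E →L[ℂ] F)
    (g : F →L[ℂ] ℂ) : adjointMap T g = g.comp T := rfl

/-- A bounded linear operator between normed spaces is weakly compact if the image of the
closed unit ball is relatively compact in the weak topology of the codomain. -/
def IsWeaklyCompactOp {E : Type u} {F : Type v} [NormedAddCommGroup E] [NormedSpace ℂ E]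
    [NormedAddCommGroup F] [NormedSpace ℂ F] (T : E →L[ℂ] F) : Prop :=
  IsCompact (closure ((toWeakSpace ℂ F) '' (T '' Metric.closedBall 0 1)))


/-! ### Auxiliary lemmas -/

section AuxGoldstine

variable {E : Type*} [NormedAddCommGroup E] [NormedSpace ℂ E]

lemma aux_goldstine_finite (H : (E →L[ℂ] ℂ) →L[ℂ] ℂ) (s : Finset (E →L[ℂ] ℂ)) {ε : ℝ} (hε : 0 < ε) :
    ∃ a : E, ‖a‖ ≤ ‖H‖ + 1 ∧ ∀ g ∈ s, ‖g a - H g‖ < ε := by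
  classical
  set r : ℝ := ‖H‖ + 1 with hr
  have hr0 : 0 < r := by positivity
  set Y := (↥s → ℂ)
  set S : E →L[ℂ] Y := ContinuousLinearMap.pi (fun g : ↥s => (g : E →L[ℂ] ℂ)) with hS
  set z : Y := fun g => H g with hz
  set B : Set E := Metric.closedBall 0 r with hB
  have hzB : z ∈ closure (S '' B) := by
    by_contra hcon
    have hconv : Convex ℝ (closure (S '' B)) := by
      refine Convex.closure ?_
      have := (convex_closedBall (0 : E) r).linear_image
        ((S.restrictScalars ℝ).toLinearMap)
      simpa using this
    obtain ⟨f, u, hfu, huz⟩ :=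
      geometric_hahn_banach_closed_point hconv isClosed_closure hcon
    set lam : ↥s → ℂ := fun i =>
      (f (Pi.single i (1:ℂ)) : ℂ) - (f (Pi.single i (Complex.I)) : ℂ) * Complex.I with hlam
    have hkey : ∀ w : Y, f w = ∑ i, (lam i * w i).re := by
      intro w
      have hw : w = ∑ i, Pi.single i (w i) := by
        rw [Finset.univ_sum_single]
      conv_lhs => rw [hw, map_sum]
      refine Finset.sum_congr rfl fun i _ => ?_
      have hdec : (Pi.single i (w i) : Y) =
          (w i).re • (Pi.single i (1:ℂ) : Y) + (w i).im • (Pi.single i Complex.I : Y) := by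
        have hval : (w i) = (w i).re • (1:ℂ) + (w i).im • Complex.I := by
          apply Complex.ext <;> simp
        rw [← Pi.single_smul, ← Pi.single_smul, ← Pi.single_add, ← hval]
      rw [hdec, map_add, map_smul, map_smul]
      simp only [hlam, Complex.mul_re, Complex.sub_re, Complex.sub_im, Complex.mul_im,
        smul_eq_mul, Complex.ofReal_re, Complex.ofReal_im, Complex.I_re, Complex.I_im]
      ring
    set φ : E →L[ℂ] ℂ := ∑ i, lam i • (i : E →L[ℂ] ℂ) with hφ
    have hSa : ∀ a : E, f (S a) = (φ a).re := by
      intro a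
      rw [hkey]
      rw [hφ]
      simp only [ContinuousLinearMap.sum_apply, ContinuousLinearMap.smul_apply,
        smul_eq_mul, Complex.re_sum]
      rfl
    have hfz : f z = (H φ).re := by
      rw [hkey, hφ, map_sum]
      simp only [map_smul, smul_eq_mul, Complex.re_sum]
      rfl
    have hub : ∀ a ∈ B, (φ a).re < u := by
      intro a ha
      rw [← hSa]
      exact hfu _ (subset_closure ⟨a, ha, rfl⟩)
    have h0u : 0 < u := by
      have := hub 0 (by simp [hB]; positivity)
      simpa using this
    have hnorm : ∀ a : E, ‖a‖ ≤ 1 → r * ‖φ a‖ ≤ u := by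
      intro a ha
      by_cases h : φ a = 0
      · simp [h]; positivity
      · set c : ℂ := (r : ℂ) * (‖φ a‖ : ℂ) / (φ a) with hc
        have hφa : ‖φ a‖ ≠ 0 := norm_ne_zero_iff.mpr h
        have hnc : ‖c‖ = r := by
          rw [hc, norm_div, norm_mul]
          simp only [Complex.norm_real, Real.norm_eq_abs]
          rw [abs_of_pos hr0,
            abs_of_nonneg (norm_nonneg _),
            mul_div_assoc, div_self hφa, mul_one]
        have hmem : c • a ∈ B := by
          simp only [hB, Metric.mem_closedBall, dist_zero_right, norm_smul, hnc]
          calc r * ‖a‖ ≤ r * 1 := mul_le_mul_of_nonneg_left ha hr0.le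
            _ = r := mul_one r
        have hval : φ (c • a) = ((r * ‖φ a‖ : ℝ) : ℂ) := by
          rw [map_smul, smul_eq_mul, hc]
          field_simp
          norm_cast
        have := hub _ hmem
        rw [hval] at this
        simpa using this.le
    have hopn : ‖φ‖ ≤ u / r := by
      refine ContinuousLinearMap.opNorm_le_bound' φ (by positivity) fun x hx => ?_
      have hx0 : (0:ℝ) < ‖x‖ := lt_of_le_of_ne (norm_nonneg x) (Ne.symm hx)
      have h1 : ‖((‖x‖:ℂ))⁻¹ • x‖ ≤ 1 := by
        rw [norm_smul, norm_inv, Complex.norm_real, Real.norm_eq_abs, abs_of_pos hx0,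
          inv_mul_cancel₀ (ne_of_gt hx0)]
      have h2 := hnorm _ h1
      rw [map_smul, norm_smul, norm_inv, Complex.norm_real, Real.norm_eq_abs,
        abs_of_pos hx0] at h2
      rw [div_mul_eq_mul_div, le_div_iff₀ hr0, mul_comm]
      calc r * ‖φ x‖ = ‖x‖ * (r * (‖x‖⁻¹ * ‖φ x‖)) := by field_simp
        _ ≤ ‖x‖ * u := mul_le_mul_of_nonneg_left h2 hx0.le
        _ = u * ‖x‖ := mul_comm _ _
    have hru : r * ‖φ‖ ≤ u := by
      rw [mul_comm]
      exact (le_div_iff₀ hr0).mp hopn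
    have hfinal : u < ‖H‖ * ‖φ‖ := by
      calc u < f z := huz
        _ = (H φ).re := hfz
        _ ≤ ‖H φ‖ := Complex.abs_re_le_norm _ |>.trans' (le_abs_self _)
        _ ≤ ‖H‖ * ‖φ‖ := H.le_opNorm φ
    nlinarith [norm_nonneg φ]
  rw [Metric.mem_closure_iff] at hzB
  obtain ⟨y, ⟨a, haB, rfl⟩, hy⟩ := hzB ε hε
  refine ⟨a, by simpa [hB, hr] using haB, fun g hg => ?_⟩
  have hd := dist_le_pi_dist z (S a) ⟨g, hg⟩
  have h2 : dist (z ⟨g, hg⟩) (S a ⟨g, hg⟩) < ε := lt_of_le_of_lt hd hy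
  rw [dist_eq_norm] at h2
  have h3 : z ⟨g, hg⟩ - S a ⟨g, hg⟩ = H g - g a := rfl
  rw [h3] at h2
  rwa [norm_sub_rev] at h2

lemma aux_goldstine (H : (E →L[ℂ] ℂ) →L[ℂ] ℂ) :
    ∃ l : Filter E, l.NeBot ∧ (∀ᶠ a in l, ‖a‖ ≤ ‖H‖ + 1) ∧
      ∀ g : E →L[ℂ] ℂ, Tendsto (fun a => g a) l (𝓝 (H g)) := by
  classical
  set r : ℝ := ‖H‖ + 1 with hr
  set B : Set E := Metric.closedBall 0 r with hB
  set P := ((E →L[ℂ] ℂ) → ℂ)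
  set ev : E → P := fun a g => g a with hev
  set Hf : P := fun g => H g with hHf
  have hcl : Hf ∈ closure (ev '' B) := by
    rw [mem_closure_iff_nhds]
    intro t ht
    rw [nhds_pi, Filter.mem_pi] at ht
    obtain ⟨I, hIfin, tf, htf, hsub⟩ := ht
    choose ε hε hball using fun g => Metric.mem_nhds_iff.mp (htf g)
    set s := hIfin.toFinset with hs
    obtain ⟨δ, hδ0, hδle⟩ : ∃ δ > 0, ∀ g ∈ s, δ ≤ ε g := by
      rcases s.eq_empty_or_nonempty with h | h
      · exact ⟨1, one_pos, by simp [h]⟩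
      · obtain ⟨g0, hg0, hmin⟩ := s.exists_min_image ε h
        exact ⟨ε g0, hε g0, fun g hg => hmin g hg⟩
    obtain ⟨a, haB, hag⟩ := aux_goldstine_finite H s hδ0
    refine ⟨ev a, hsub ?_, a, by simpa [hB, hr] using haB, rfl⟩
    intro g hg
    have hgs : g ∈ s := hs ▸ hIfin.mem_toFinset.mpr hg
    apply hball g
    rw [Metric.mem_ball, dist_eq_norm]
    exact lt_of_lt_of_le (hag g hgs) (le_of_eq rfl) |>.trans_le (hδle g hgs)
  refine ⟨comap ev (𝓝 Hf) ⊓ 𝓟 B, ?_, ?_, ?_⟩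
  · rw [Filter.inf_principal_neBot_iff]
    intro U hU
    obtain ⟨V, hV, hVsub⟩ := Filter.mem_comap.mp hU
    obtain ⟨y, hyV, a, haB, rfl⟩ := mem_closure_iff_nhds.mp hcl V hV
    exact ⟨a, hVsub hyV, haB⟩
  · have hle : B ∈ comap ev (𝓝 Hf) ⊓ 𝓟 B := Filter.le_principal_iff.mp inf_le_right
    filter_upwards [hle] with a ha
    simpa [hB, hr] using ha
  · intro g
    have h1 : Tendsto ev (comap ev (𝓝 Hf) ⊓ 𝓟 B) (𝓝 Hf) :=
      (Filter.tendsto_iff_comap.mpr inf_le_left)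
    have h2 : Tendsto (fun p : P => p g) (𝓝 Hf) (𝓝 (Hf g)) :=
      (continuous_apply g).tendsto Hf
    exact h2.comp h1

lemma aux_weaklyCompactOp_eval {E : Type*} {F : Type*} [NormedAddCommGroup E] [NormedSpace ℂ E]
    [NormedAddCommGroup F] [NormedSpace ℂ F] (T : E →L[ℂ] F) (hT : IsWeaklyCompactOp T)
    (H : (E →L[ℂ] ℂ) →L[ℂ] ℂ) :
    ∃ h : F, ∀ G : F →L[ℂ] ℂ, H (G.comp T) = G h := by
  obtain ⟨l, hne, hbd, htd⟩ := aux_goldstine H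
  set r : ℝ := ‖H‖ + 1 with hr
  have hr0 : 0 < r := by positivity
  set y : E → WeakSpace ℂ F := fun a => toWeakSpace ℂ F (T a) with hy
  set K : Set (WeakSpace ℂ F) :=
    closure ((toWeakSpace ℂ F) '' (T '' Metric.closedBall 0 1)) with hK
  set Kr : Set (WeakSpace ℂ F) := (fun x => (r : ℂ) • x) '' K with hKr
  have hsmul : Continuous fun x : WeakSpace ℂ F => (r : ℂ) • x := by
    exact continuous_const_smul (r : ℂ)
  have hKrc : IsCompact Kr := hT.image hsmul
  have hev : ∀ᶠ a in l, y a ∈ Kr := by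
    filter_upwards [hbd] with a ha
    have hrne : (r : ℂ) ≠ 0 := by
      simp only [ne_eq, Complex.ofReal_eq_zero]
      exact ne_of_gt hr0
    have h1 : ‖((r : ℂ))⁻¹ • a‖ ≤ 1 := by
      rw [norm_smul, norm_inv, Complex.norm_real, Real.norm_eq_abs, abs_of_pos hr0]
      rw [inv_mul_le_iff₀ hr0, mul_one]
      exact ha
    have h2 : T a = (r : ℂ) • T (((r : ℂ))⁻¹ • a) := by
      rw [map_smul, smul_smul, mul_inv_cancel₀ hrne, one_smul]
    refine ⟨toWeakSpace ℂ F (T (((r:ℂ))⁻¹ • a)), subset_closure ⟨_, ⟨_, ?_, rfl⟩, rfl⟩, ?_⟩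
    · simpa using h1
    · show (r:ℂ) • toWeakSpace ℂ F (T (((r:ℂ))⁻¹ • a)) = toWeakSpace ℂ F (T a)
      rw [← map_smul, ← h2]
  have hmap : map y l ≤ 𝓟 Kr := Filter.le_principal_iff.mpr hev
  have : (map y l).NeBot := hne.map y
  obtain ⟨h', hh'K, hclus⟩ := hKrc.exists_clusterPt hmap
  refine ⟨(toWeakSpace ℂ F).symm h', fun G => ?_⟩
  have hGc : Continuous fun x : WeakSpace ℂ F => G ((toWeakSpace ℂ F).symm x) := by
    exact WeakBilin.eval_continuous ((topDualPairing ℂ F).flip) G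
  have htd2 : Tendsto (fun a => G ((toWeakSpace ℂ F).symm (y a))) l (𝓝 (H (G.comp T))) := by
    have := htd (G.comp T)
    convert this using 1
    rfl
  have hm : (𝓝 h' ⊓ map y l).NeBot := hclus
  have hle : map (fun x => G ((toWeakSpace ℂ F).symm x)) (𝓝 h' ⊓ map y l) ≤
      𝓝 (G ((toWeakSpace ℂ F).symm h')) ⊓ 𝓝 (H (G.comp T)) := by
    refine le_inf ?_ ?_
    · exact (Filter.map_mono inf_le_left).trans (hGc.continuousAt (x := h'))
    · refine (Filter.map_mono inf_le_right).trans ?_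
      rw [Filter.map_map]
      exact htd2
  have hnb : (𝓝 (G ((toWeakSpace ℂ F).symm h')) ⊓ 𝓝 (H (G.comp T))).NeBot :=
    Filter.neBot_of_le hle
  exact (t2_iff_nhds.mp inferInstance hnb).symm


end AuxGoldstine

section MainAux

/-- The canonical embedding of `A` into its bidual. -/
def Jmap : A →L[ℂ] Bidual A := NormedSpace.inclusionInDoubleDual ℂ A

lemma Jmap_mul (a b : A) : (Jmap a : Bidual A) * Jmap b = Jmap (a * b) := by
  refine ContinuousLinearMap.ext fun g => ?_
  rfl

lemma aux_dotAct_Jmap (c : A) (g : A →L[ℂ] ℂ) :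
    Bidual.dotAct A (Jmap c) g = lActL A g c := by
  refine ContinuousLinearMap.ext fun b => ?_
  rfl

lemma aux_star (f : A →L[ℂ] ℂ) (hw : IsWeaklyCompactOp (lActL A f)) (G H : Bidual A) :
    G (Bidual.dotAct A H f) = H (G.comp (lActL A f)) := by
  obtain ⟨h, hh⟩ := aux_weaklyCompactOp_eval (lActL A f) hw H
  have hid : h = Bidual.dotAct A H f := by
    refine ContinuousLinearMap.ext fun b => ?_
    have h1 := hh (Jmap b)
    have h2 : ((Jmap b : Bidual A)).comp (lActL A f) = Bidual.rActL A f b := by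
      refine ContinuousLinearMap.ext fun a => ?_
      rfl
    rw [h2] at h1
    exact h1.symm
  rw [← hid]
  exact (hh G).symm

variable (D : A →L[ℂ] (A →L[ℂ] ℂ))

lemma aux_Jmap_comp_D (hcyc : IsCyclicDeriv D) (b : A) :
    ((Jmap b : Bidual A)).comp D = -(D b) := by
  refine ContinuousLinearMap.ext fun a => ?_
  have h := hcyc a b
  show D a b = -((D b) a)
  linear_combination h

lemma aux_f_eq (hcyc : IsCyclicDeriv D) (F : Bidual A) (f : A →L[ℂ] ℂ)
    (hf : adjointMap (adjointMap D) F = NormedSpace.inclusionInDoubleDual ℂ (A →L[ℂ] ℂ) f) :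
    f = -(F.comp D) := by
  refine ContinuousLinearMap.ext fun b => ?_
  have h1 := congrArg (fun Φ : Bidual A →L[ℂ] ℂ => Φ (Jmap b)) (congrArg (fun Ψ => Ψ) hf)
  have h2 : adjointMap (adjointMap D) F (Jmap b) = F (((Jmap b : Bidual A)).comp D) := rfl
  have h3 : NormedSpace.inclusionInDoubleDual ℂ (A →L[ℂ] ℂ) f (Jmap b) = f b := rfl
  rw [h2, h3, aux_Jmap_comp_D D hcyc b, map_neg] at h1
  show f b = -(F (D b))
  linear_combination -h1

lemma aux_antisym
    (hwap : ∀ F : Bidual A, ∃ f : A →L[ℂ] ℂ, IsWeaklyCompactOp (lActL A f) ∧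
      adjointMap (adjointMap D) F = NormedSpace.inclusionInDoubleDual ℂ (A →L[ℂ] ℂ) f)
    (hcyc : IsCyclicDeriv D) (F G : Bidual A) :
    F (G.comp D) = -(G (F.comp D)) := by
  obtain ⟨f, _, hf⟩ := hwap F
  have hfD := aux_f_eq D hcyc F f hf
  have h4 : F (G.comp D) = adjointMap (adjointMap D) F G := rfl
  have h5 : NormedSpace.inclusionInDoubleDual ℂ (A →L[ℂ] ℂ) f G = G f := rfl
  rw [h4, hf, h5, hfD, map_neg]

lemma aux_cyclic3 (hder : IsDerivation D) (hcyc : IsCyclicDeriv D) (a b c : A) :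
    D (a * b) c + D (b * c) a + D (c * a) b = 0 := by
  have h1 : D (a * b) c = D a (b * c) + D b (c * a) := by
    rw [hder a b]
    rfl
  linear_combination h1 + hcyc (b * c) a + hcyc (c * a) b

lemma aux_stepB (hder : IsDerivation D) (hcyc : IsCyclicDeriv D) (a c : A) (G : Bidual A) :
    Bidual.rActL A (D c) a + Bidual.dotAct A (Jmap c) (D a) - D (c * a) = 0 := by
  refine ContinuousLinearMap.ext fun b => ?_
  have e1 : (Bidual.rActL A (D c) a + Bidual.dotAct A (Jmap c) (D a) - D (c * a)) b
      = D c (a * b) + D a (b * c) - D (c * a) b := rfl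
  rw [e1, ContinuousLinearMap.zero_apply]
  linear_combination hcyc (a * b) c + hcyc (b * c) a - aux_cyclic3 D hder hcyc a b c

lemma aux_stepC
    (hwap : ∀ F : Bidual A, ∃ f : A →L[ℂ] ℂ, IsWeaklyCompactOp (lActL A f) ∧
      adjointMap (adjointMap D) F = NormedSpace.inclusionInDoubleDual ℂ (A →L[ℂ] ℂ) f)
    (hder : IsDerivation D) (hcyc : IsCyclicDeriv D) (F G : Bidual A) (c : A) :
    Bidual.dotAct A G (D c) + ((G * Jmap c : Bidual A)).comp D - Bidual.rActL A (G.comp D) c = 0 := by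
  refine ContinuousLinearMap.ext fun a => ?_
  have hB := congrArg (fun ψ : A →L[ℂ] ℂ => G ψ) (aux_stepB D hder hcyc a c G)
  simp only [map_zero] at hB
  rw [map_sub, map_add] at hB
  have e1 : (Bidual.dotAct A G (D c) + ((G * Jmap c : Bidual A)).comp D
      - Bidual.rActL A (G.comp D) c) a
      = G (Bidual.rActL A (D c) a) + G (Bidual.dotAct A (Jmap c) (D a)) - G (D (c * a)) := rfl
  rw [e1, ContinuousLinearMap.zero_apply]
  exact hB

lemma aux_stepD
    (hwap : ∀ F : Bidual A, ∃ f : A →L[ℂ] ℂ, IsWeaklyCompactOp (lActL A f) ∧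
      adjointMap (adjointMap D) F = NormedSpace.inclusionInDoubleDual ℂ (A →L[ℂ] ℂ) f)
    (hder : IsDerivation D) (hcyc : IsCyclicDeriv D) (F G H : Bidual A) :
    (F * G : Bidual A) (H.comp D) = F (((G * H : Bidual A)).comp D)
      + G (((H * F : Bidual A)).comp D) := by
  obtain ⟨f, hwf, hf⟩ := hwap F
  have hfD : F.comp D = -f := by
    rw [aux_f_eq D hcyc F f hf, neg_neg]
  have t1 : (F * G : Bidual A) (H.comp D) = -(H (((F * G : Bidual A)).comp D)) :=
    aux_antisym D hwap hcyc (F * G) H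
  have t2 : F (((G * H : Bidual A)).comp D) = -((G * H : Bidual A) (F.comp D)) :=
    aux_antisym D hwap hcyc F (G * H)
  have t3 : G (((H * F : Bidual A)).comp D) = -((H * F : Bidual A) (G.comp D)) :=
    aux_antisym D hwap hcyc G (H * F)
  have e2 : (G * H : Bidual A) (F.comp D) = G (Bidual.dotAct A H (F.comp D)) := rfl
  have e3 : (H * F : Bidual A) (G.comp D) = H (Bidual.dotAct A F (G.comp D)) := rfl
  have hstar : G (Bidual.dotAct A H (F.comp D)) = -(H (G.comp (lActL A f))) := by
    rw [hfD, map_neg, map_neg, aux_star f hwf G H]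
  have hω : ((F * G : Bidual A)).comp D + G.comp (lActL A f)
      - Bidual.dotAct A F (G.comp D) = 0 := by
    refine ContinuousLinearMap.ext fun c => ?_
    have hC := congrArg (fun χ : A →L[ℂ] ℂ => F χ) (aux_stepC D hwap hder hcyc F G c)
    simp only [map_zero] at hC
    rw [map_sub, map_add] at hC
    have eA : (((F * G : Bidual A)).comp D + G.comp (lActL A f)
        - Bidual.dotAct A F (G.comp D)) c
        = (F * G : Bidual A) (D c) + G (lActL A f c) - F (Bidual.rActL A (G.comp D) c) := rfl
    have eB : (F * G : Bidual A) (D c) = F (Bidual.dotAct A G (D c)) := rfl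
    have eC : F (((G * Jmap c : Bidual A)).comp D) = G (lActL A f c) := by
      rw [aux_antisym D hwap hcyc F (G * Jmap c)]
      have e1 : (G * Jmap c : Bidual A) (F.comp D)
          = G (Bidual.dotAct A (Jmap c) (F.comp D)) := rfl
      rw [e1, hfD, map_neg, map_neg, aux_dotAct_Jmap, neg_neg]
    rw [eA, eB, ← eC, ContinuousLinearMap.zero_apply]
    exact hC
  have hfin := congrArg (fun ψ : A →L[ℂ] ℂ => H ψ) hω
  simp only [map_zero] at hfin
  rw [map_sub, map_add] at hfin
  rw [t1, t2, t3, e2, e3, hstar]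
  linear_combination -hfin

end MainAux

set_option maxHeartbeats 2000000 in
set_option synthInstance.maxHeartbeats 800000 in
/-- Suppose every cyclic bounded derivation `D : A → A*` satisfies
`D**(A**) ⊆ WAP(A)` (viewing `WAP(A) ⊆ A* ⊆ A***`), where `WAP(A)` is the set of `f ∈ A*`
such that `a ↦ a · f` is weakly compact.  If `(A**, □)` is approximately cyclic amenable,
then `A` is approximately cyclic amenable. -/
theorem approxCyclicAmenable_of_bidual_wap
    {A : Type u} [NonUnitalNormedRing A] [NormedSpace ℂ A]
    [IsScalarTower ℂ A A] [SMulCommClass ℂ A A] [CompleteSpace A]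
    (hwap : ∀ D : A →L[ℂ] (A →L[ℂ] ℂ), IsDerivation D → IsCyclicDeriv D →
      ∀ F : Bidual A, ∃ f : A →L[ℂ] ℂ, IsWeaklyCompactOp (lActL A f) ∧
        adjointMap (adjointMap D) F = NormedSpace.inclusionInDoubleDual ℂ (A →L[ℂ] ℂ) f)
    (hACA : ApproxCyclicAmenable (Bidual A)) :
    ApproxCyclicAmenable A := by
  intro D hder hcyc
  have hwapD := hwap D hder hcyc
  set Dtil : Bidual A →L[ℂ] (Bidual A →L[ℂ] ℂ) := adjointMap (adjointMap D) with hDtil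
  have hderT : IsDerivation (A := Bidual A) Dtil := by
    intro F G
    refine ContinuousLinearMap.ext fun H => ?_
    have e1 : Dtil (F * G) H = (F * G : Bidual A) (H.comp D) := rfl
    have eR : rAct (A := Bidual A) (Dtil F) G H = F (((G * H : Bidual A)).comp D) := by
      show Dtil F ((ContinuousLinearMap.mul ℂ (Bidual A)) G H) = _
      rw [ContinuousLinearMap.mul_apply']
      rfl
    have eL : lAct (A := Bidual A) F (Dtil G) H = G (((H * F : Bidual A)).comp D) := by
      show Dtil G ((ContinuousLinearMap.mul ℂ (Bidual A)).flip F H) = _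
      rw [ContinuousLinearMap.flip_apply, ContinuousLinearMap.mul_apply']
      rfl
    rw [e1, ContinuousLinearMap.add_apply, eR, eL]
    exact aux_stepD D hwapD hder hcyc F G H
  have hcycT : IsCyclicDeriv (A := Bidual A) Dtil := by
    intro F G
    have e1 : Dtil F G = F (G.comp D) := rfl
    have e2 : Dtil G F = G (F.comp D) := rfl
    rw [e1, e2, aux_antisym D hwapD hcyc F G]
    ring
  obtain ⟨ι, l, Λ, hne, hconv⟩ := hACA Dtil hderT hcycT
  set R : (Bidual A →L[ℂ] ℂ) →L[ℂ] (A →L[ℂ] ℂ) := adjointMap (F := (A →L[ℂ] ℂ) →L[ℂ] ℂ) (Jmap (A := A)) with hR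
  refine ⟨ι, l, fun i => R (Λ i), hne, fun a => ?_⟩
  have h0 := hconv (Jmap a)
  have h1 : Tendsto (fun i => R (lAct (Jmap a) (Λ i) - rAct (Λ i) (Jmap a))) l
      (𝓝 (R (Dtil (Jmap a)))) := (R.continuous.tendsto _).comp h0
  have tr1 : ∀ Λ' : Bidual A →L[ℂ] ℂ, R (lAct (Jmap a) Λ') = lAct a (R Λ') := by
    intro Λ'
    refine ContinuousLinearMap.ext fun b => ?_
    show Λ' ((Jmap b : Bidual A) * Jmap a) = Λ' (Jmap (b * a))
    rw [Jmap_mul]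
  have tr2 : ∀ Λ' : Bidual A →L[ℂ] ℂ, R (rAct Λ' (Jmap a)) = rAct (R Λ') a := by
    intro Λ'
    refine ContinuousLinearMap.ext fun b => ?_
    show Λ' ((Jmap a : Bidual A) * Jmap b) = Λ' (Jmap (a * b))
    rw [Jmap_mul]
  have tr3 : R (Dtil (Jmap a)) = D a := by
    refine ContinuousLinearMap.ext fun b => ?_
    rfl
  rw [tr3] at h1
  refine h1.congr fun i => ?_
  rw [map_sub, tr1, tr2]
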